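/- Let G be a connected graph (with a loop at every vertex), r ≡ 0 (mod 3), r ≥ 6, and diam(G) ≥ r. If x, y are vertices with 2 < d(x,y) < r, then x is sufficient or y is sufficient, where a vertex v is sufficient if |N^r(v)| ≥ (r/3 + 1)·δ(G). -/

import Mathlib

/-- The ball of radius `r` around `v` (the `r`-th neighbourhood `N^r(v)`). -/
def SimpleGraph.ballNat {V : Type*} (G : SimpleGraph V) (r : ℕ) (v : V) : Set V :=
  {u : V | G.dist v u ≤ r}

/-- A vertex is *sufficient* if `|N^r(v)| ≥ (r/3 + 1)·δ`, where `δ = G.minDegree + 1`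
is the minimum degree of the graph with a loop at every vertex. -/
def SimpleGraph.Sufficient {V : Type*} [Fintype V] (G : SimpleGraph V)
    [DecidableRel G.Adj] (r : ℕ) (v : V) : Prop :=
  (r / 3 + 1) * (G.minDegree + 1) ≤ (G.ballNat r v).ncard

open Finset in
/-- Key counting lemma: `m` centers, pairwise at distance `≥ 3`, whose closed
neighbourhoods all lie in a finite set `S`, force `S.card ≥ m * (minDegree + 1)`. -/
lemma key_count {V : Type*} [Fintype V] (G : SimpleGraph V) [DecidableRel G.Adj]
    (hG : G.Connected) (m : ℕ) (c : Fin m → V)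
    (hsep : ∀ i j : Fin m, i ≠ j → 3 ≤ G.dist (c i) (c j))
    (S : Finset V) (hsub : ∀ (i : Fin m) (u : V), G.dist (c i) u ≤ 1 → u ∈ S) :
    m * (G.minDegree + 1) ≤ S.card := by
  classical
  have hNmem : ∀ (i : Fin m) (u : V),
      u ∈ insert (c i) (G.neighborFinset (c i)) → G.dist (c i) u ≤ 1 := by
    intro i u hu
    rcases Finset.mem_insert.mp hu with h | h
    · subst h
      simp [SimpleGraph.dist_self]
    · exact SimpleGraph.dist_le ((G.mem_neighborFinset _ _).mp h).toWalk
  have hcard : ∀ i : Fin m,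
      G.minDegree + 1 ≤ (insert (c i) (G.neighborFinset (c i))).card := by
    intro i
    rw [Finset.card_insert_of_notMem (by simp),
      SimpleGraph.card_neighborFinset_eq_degree]
    exact Nat.add_le_add_right (G.minDegree_le_degree (c i)) 1
  have hdisj : ∀ i j : Fin m, i ≠ j →
      Disjoint (insert (c i) (G.neighborFinset (c i)))
        (insert (c j) (G.neighborFinset (c j))) := by
    intro i j hij
    rw [Finset.disjoint_left]
    intro u hui huj
    have h1 := hNmem i u hui
    have h2 := hNmem j u huj
    have htri := hG.dist_triangle (u := c i) (v := u) (w := c j)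
    rw [SimpleGraph.dist_comm (u := u)] at htri
    have := hsep i j hij
    omega
  calc m * (G.minDegree + 1) = ∑ _i : Fin m, (G.minDegree + 1) := by simp [mul_comm]
    _ ≤ ∑ i : Fin m, (insert (c i) (G.neighborFinset (c i))).card :=
        Finset.sum_le_sum fun i _ => hcard i
    _ = (Finset.univ.biUnion fun i => insert (c i) (G.neighborFinset (c i))).card :=
        (Finset.card_biUnion (fun i _ j _ hij => hdisj i j hij)).symm
    _ ≤ S.card := by
        apply Finset.card_le_card
        intro u hu
        rcases Finset.mem_biUnion.mp hu with ⟨i, _, hi⟩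
        exact hsub i u (hNmem i u hi)

open Classical in
/-- The ball's `ncard` equals the card of the corresponding finset. -/
lemma ball_ncard_eq {V : Type*} [Fintype V] (G : SimpleGraph V) (r : ℕ) (v : V) :
    (G.ballNat r v).ncard = (Finset.univ.filter (fun u => G.dist v u ≤ r)).card := by
  rw [← Set.ncard_coe_finset]
  congr 1
  ext u
  simp [SimpleGraph.ballNat]

/-- Along a geodesic from `a` to `b`, the vertex at position `j` is at exact
distance `j` from `a`, and positions `i ≤ j` are at distance at most `j - i`. -/
lemma exists_geodesic_points {V : Type*} (G : SimpleGraph V) (hG : G.Connected)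
    (a b : V) : ∃ p : ℕ → V, p 0 = a ∧
      (∀ i j, i ≤ j → j ≤ G.dist a b → G.dist (p i) (p j) ≤ j - i) ∧
      (∀ j, j ≤ G.dist a b → G.dist a (p j) = j) := by
  obtain ⟨w, hw⟩ := hG.exists_walk_length_eq_dist a b
  have hstep : ∀ i j : ℕ, i ≤ j → j ≤ w.length →
      G.dist (w.getVert i) (w.getVert j) ≤ j - i := by
    intro i j hij hjl
    obtain ⟨k, rfl⟩ := Nat.exists_eq_add_of_le hij
    clear hij
    induction k with
    | zero => simp
    | succ n ih =>
      have hlt' : i + n < w.length := by omega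
      have hadj := w.adj_getVert_succ hlt'
      have h1 : G.dist (w.getVert (i + n)) (w.getVert (i + n + 1)) ≤ 1 :=
        SimpleGraph.dist_le hadj.toWalk
      have htri := hG.dist_triangle (u := w.getVert i) (v := w.getVert (i + n))
        (w := w.getVert (i + n + 1))
      have h2 := ih (by omega)
      have he : i + (n + 1) = i + n + 1 := by omega
      rw [he]
      omega
  refine ⟨fun j => w.getVert j, w.getVert_zero, ?_, ?_⟩
  · intro i j hij hjl
    exact hstep i j hij (by omega)
  · intro j hj
    show G.dist a (w.getVert j) = j
    have hle : G.dist a (w.getVert j) ≤ j := by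
      have := hstep 0 j (Nat.zero_le _) (by omega)
      simpa [w.getVert_zero] using this
    have hsuf : G.dist (w.getVert j) b ≤ G.dist a b - j := by
      have := hstep j w.length (by omega) le_rfl
      rwa [w.getVert_length, hw] at this
    have htri := hG.dist_triangle (u := a) (v := w.getVert j) (w := b)
    omega

/-- if `r ≡ 0 (mod 3)`, `r ≥ 6`, `diam(G) ≥ r` and `2 < d(x,y) < r`,
then `x` or `y` is sufficient. -/
theorem edge_growth_middle_distance_sufficient {V : Type*} [Fintype V]
    (G : SimpleGraph V) [DecidableRel G.Adj] (hG : G.Connected)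
    (r : ℕ) (hr3 : r % 3 = 0) (hr : 6 ≤ r)
    (hdiam : ∃ u w : V, r ≤ G.dist u w)
    (x y : V) (h2 : 2 < G.dist x y) (hlt : G.dist x y < r) :
    G.Sufficient r x ∨ G.Sufficient r y := by
  classical
  set m := r / 3 with hm
  have hrm : r = 3 * m := by omega
  have hm2 : 2 ≤ m := by omega
  -- Step 1: the whole graph has at least (m+1)·δ vertices.
  have hcardV : (m + 1) * (G.minDegree + 1) ≤ Fintype.card V := by
    obtain ⟨u, w0, huw⟩ := hdiam
    obtain ⟨p, hp0, hup, hex⟩ := exists_geodesic_points G hG u w0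
    have hsep : ∀ i j : Fin (m + 1), i ≠ j →
        3 ≤ G.dist (p (3 * (i : ℕ))) (p (3 * (j : ℕ))) := by
      intro i j hij
      have hdi : G.dist u (p (3 * (i : ℕ))) = 3 * (i : ℕ) :=
        hex _ (by have := i.isLt; omega)
      have hdj : G.dist u (p (3 * (j : ℕ))) = 3 * (j : ℕ) :=
        hex _ (by have := j.isLt; omega)
      have ht1 := hG.dist_triangle (u := u) (v := p (3 * (i : ℕ)))
        (w := p (3 * (j : ℕ)))
      have ht2 := hG.dist_triangle (u := u) (v := p (3 * (j : ℕ)))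
        (w := p (3 * (i : ℕ)))
      rw [SimpleGraph.dist_comm (u := p (3 * (j : ℕ)))] at ht2
      have hne : (i : ℕ) ≠ (j : ℕ) := fun h => hij (Fin.ext h)
      omega
    have := key_count G hG (m + 1) (fun k => p (3 * (k : ℕ))) hsep Finset.univ
      (fun _ u _ => Finset.mem_univ u)
    simpa using this
  -- Case split: does x have a vertex at distance ≥ r?
  by_cases hex0 : ∃ z, r ≤ G.dist x z
  · obtain ⟨z, hz⟩ := hex0
    obtain ⟨p, hp0, hup, hexact⟩ := exists_geodesic_points G hG x z
    have hdist : ∀ k, k ≤ m → G.dist x (p (3 * k)) = 3 * k := fun k hk =>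
      hexact _ (by omega)
    have hsep3 : ∀ i j : ℕ, i ≤ m → j ≤ m → i ≠ j →
        3 ≤ G.dist (p (3 * i)) (p (3 * j)) := by
      intro i j hi hj hij
      have hdi := hdist i hi
      have hdj := hdist j hj
      have ht1 := hG.dist_triangle (u := x) (v := p (3 * i)) (w := p (3 * j))
      have ht2 := hG.dist_triangle (u := x) (v := p (3 * j)) (w := p (3 * i))
      rw [SimpleGraph.dist_comm (u := p (3 * j))] at ht2
      omega
    -- distance upper bound between geodesic points (both orders)
    have hub : ∀ i j : ℕ, i ≤ m → j ≤ m →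
        G.dist (p (3 * i)) (p (3 * j)) ≤ 3 * i + 3 * j - 3 * min i j - 3 * min i j := by
      intro i j hi hj
      rcases le_total i j with h | h
      · have := hup (3 * i) (3 * j) (by omega) (by omega)
        have hmin : min i j = i := min_eq_left h
        omega
      · have := hup (3 * j) (3 * i) (by omega) (by omega)
        rw [SimpleGraph.dist_comm] at this
        have hmin : min i j = j := min_eq_right h
        omega
    by_cases hcb : ∃ i, i ≤ m - 1 ∧ G.dist y (p (3 * i)) ≤ 2
    · -- Case B: y is sufficient, using all the points p 0, p 3, ..., p r.
      right
      obtain ⟨i, him, hyi⟩ := hcb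
      have hi1 : 1 ≤ i := by
        by_contra h
        have hi0 : i = 0 := by omega
        subst hi0
        simp only [Nat.mul_zero] at hyi
        rw [hp0, SimpleGraph.dist_comm] at hyi
        omega
      have hyk : ∀ k, k ≤ m → G.dist y (p (3 * k)) ≤ r - 1 := by
        intro k hk
        have ht := hG.dist_triangle (u := y) (v := p (3 * i)) (w := p (3 * k))
        have hb := hub i k (by omega) hk
        rcases le_total i k with h | h
        · have hmin : min i k = i := min_eq_left h
          omega
        · have hmin : min i k = k := min_eq_right h
          omega
      have hkey := key_count G hG (m + 1) (fun k => p (3 * (k : ℕ)))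
        (fun i j hij => hsep3 i j (by have := i.isLt; omega) (by have := j.isLt; omega)
          (fun h => hij (Fin.ext h)))
        (Finset.univ.filter (fun u => G.dist y u ≤ r))
        (by
          intro k u hu
          have hu' : G.dist (p (3 * (k : ℕ))) u ≤ 1 := hu
          simp only [Finset.mem_filter, Finset.mem_univ, true_and]
          have ht := hG.dist_triangle (u := y) (v := p (3 * (k : ℕ))) (w := u)
          have := hyk k (by have := k.isLt; omega)
          omega)
      rw [SimpleGraph.Sufficient, ball_ncard_eq]
      calc (r / 3 + 1) * (G.minDegree + 1) = (m + 1) * (G.minDegree + 1) := by rw [hm]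
        _ ≤ _ := hkey
    · -- Case A: x is sufficient, using p 0, ..., p (r-3) together with y.
      left
      push_neg at hcb
      have hkey := key_count G hG (m + 1)
        (fun k => if (k : ℕ) = m then y else p (3 * (k : ℕ)))
        (by
          intro a b hab
          have hane : (a : ℕ) ≠ (b : ℕ) := fun h => hab (Fin.ext h)
          show 3 ≤ G.dist (if (a : ℕ) = m then y else p (3 * (a : ℕ)))
            (if (b : ℕ) = m then y else p (3 * (b : ℕ)))
          by_cases ha : (a : ℕ) = m
          · rw [if_pos ha, if_neg (by omega)]
            have := hcb b (by have := b.isLt; omega)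
            omega
          · rw [if_neg ha]
            by_cases hb : (b : ℕ) = m
            · rw [if_pos hb, SimpleGraph.dist_comm]
              have := hcb a (by have := a.isLt; omega)
              omega
            · rw [if_neg hb]
              exact hsep3 a b (by have := a.isLt; omega) (by have := b.isLt; omega) hane)
        (Finset.univ.filter (fun u => G.dist x u ≤ r))
        (by
          intro k u hu
          have hu' : G.dist (if (k : ℕ) = m then y else p (3 * (k : ℕ))) u ≤ 1 := hu
          simp only [Finset.mem_filter, Finset.mem_univ, true_and]
          by_cases hk : (k : ℕ) = m
          · rw [if_pos hk] at hu'
            have ht := hG.dist_triangle (u := x) (v := y) (w := u)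
            omega
          · rw [if_neg hk] at hu'
            have ht := hG.dist_triangle (u := x) (v := p (3 * (k : ℕ))) (w := u)
            have := hdist k (by have := k.isLt; omega)
            have hk' : (k : ℕ) ≤ m - 1 := by have := k.isLt; omega
            omega)
      rw [SimpleGraph.Sufficient, ball_ncard_eq]
      calc (r / 3 + 1) * (G.minDegree + 1) = (m + 1) * (G.minDegree + 1) := by rw [hm]
        _ ≤ _ := hkey
  · -- Every vertex is within distance r of x: the ball is everything.
    left
    push_neg at hex0
    rw [SimpleGraph.Sufficient, ball_ncard_eq]
    have hall : (Finset.univ.filter (fun u => G.dist x u ≤ r)) = Finset.univ := by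
      ext u
      simp only [Finset.mem_filter, Finset.mem_univ, true_and, iff_true]
      exact le_of_lt (hex0 u)
    rw [hall, Finset.card_univ]
    calc (r / 3 + 1) * (G.minDegree + 1) = (m + 1) * (G.minDegree + 1) := by rw [hm]
      _ ≤ _ := hcardV
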